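/- Let g(t) = θ₁(1 + η₂ t + (η₃/2) t²)e^{-t} with θ₁ > 0, η₂, η₃ ≥ 0. Then g is convex on [0, ∞) if and only if 2η₂ − η₃ ≤ 1 and (η₂ ≥ 2η₃ or 2η₂² + 4(η₃ − 1/2)² ≤ 1). -/

import Mathlib

/-- Derivative of `θ(a + bt + ct²)e^{-t}`. -/
lemma aux_hasDerivAt_poly_exp (θ a b c t : ℝ) :
    HasDerivAt (fun t : ℝ => θ * (a + b * t + c * t ^ 2) * Real.exp (-t))
      (θ * ((b - a) + (2 * c - b) * t - c * t ^ 2) * Real.exp (-t)) t := by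
  have he : HasDerivAt (fun t : ℝ => Real.exp (-t)) (-Real.exp (-t)) t := by
    simpa using ((hasDerivAt_id t).neg).exp
  have h0 : HasDerivAt (fun t : ℝ => a + b * t + c * t ^ 2) (0 + b * 1 + c * (2 * t ^ 1)) t := by
    exact ((hasDerivAt_const t a).add ((hasDerivAt_id t).const_mul b)).add
      ((hasDerivAt_pow 2 t).const_mul c)
  have hp : HasDerivAt (fun t : ℝ => θ * (a + b * t + c * t ^ 2))
      (θ * (0 + b * 1 + c * (2 * t ^ 1))) t := h0.const_mul θ
  have : HasDerivAt (fun t : ℝ => θ * (a + b * t + c * t ^ 2) * Real.exp (-t))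
      (θ * (0 + b * 1 + c * (2 * t ^ 1)) * Real.exp (-t)
        + θ * (a + b * t + c * t ^ 2) * -Real.exp (-t)) t := hp.fun_mul he
  convert this using 1
  ring

/-- `g(t) = θ₁(1 + η₂t + (η₃/2)t²)e^(-t)` is convex on `[0,∞)` iff
`2η₂ − η₃ ≤ 1` and (`η₂ ≥ 2η₃` or `2η₂² + 4(η₃−1/2)² ≤ 1`). -/
theorem kernel_convexity_iff (θ1 η2 η3 : ℝ) (h1 : 0 < θ1) (h2 : 0 ≤ η2)
    (h3 : 0 ≤ η3) (g : ℝ → ℝ)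
    (hg : ∀ t, g t = θ1 * (1 + η2 * t + η3 / 2 * t ^ 2) * Real.exp (-t)) :
    ConvexOn ℝ (Set.Ici (0 : ℝ)) g
      ↔ (2 * η2 - η3 ≤ 1 ∧ (2 * η3 ≤ η2 ∨ 2 * η2 ^ 2 + 4 * (η3 - 1 / 2) ^ 2 ≤ 1)) := by
  have hgfun : g = fun t => θ1 * (1 + η2 * t + η3 / 2 * t ^ 2) * Real.exp (-t) := funext hg
  set h : ℝ → ℝ := fun t =>
    θ1 * ((η2 - 1) + (η3 - η2) * t - η3 / 2 * t ^ 2) * Real.exp (-t) with hh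
  have hd_g : ∀ t, HasDerivAt g (h t) t := by
    intro t
    rw [hgfun]
    have := aux_hasDerivAt_poly_exp θ1 1 η2 (η3 / 2) t
    convert this using 1
    simp only [hh]
    ring
  have hd_h : ∀ t, HasDerivAt h
      (θ1 * ((1 - 2 * η2 + η3) + (η2 - 2 * η3) * t + η3 / 2 * t ^ 2) * Real.exp (-t)) t := by
    intro t
    have := aux_hasDerivAt_poly_exp θ1 (η2 - 1) (η3 - η2) (-(η3 / 2)) t
    have hfun : h = fun t : ℝ =>
        θ1 * ((η2 - 1) + (η3 - η2) * t + -(η3 / 2) * t ^ 2) * Real.exp (-t) := by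
      funext s; rw [hh]; ring
    rw [hfun]
    convert this using 2
    ring
  constructor
  · intro hcvx
    have hmono : MonotoneOn (deriv g) (Set.Ici 0) :=
      hcvx.monotoneOn_deriv fun x _ => (hd_g x).differentiableAt
    have hderiv : deriv g = h := funext fun t => (hd_g t).deriv
    rw [hderiv] at hmono
    have key : ∀ t : ℝ, 0 ≤ t →
        0 ≤ (1 - 2 * η2 + η3) + (η2 - 2 * η3) * t + η3 / 2 * t ^ 2 := by
      intro t ht
      have hd := hd_h t
      have htend : Filter.Tendsto (slope h t) (nhdsWithin t (Set.Ioi t))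
          (nhds (θ1 * ((1 - 2 * η2 + η3) + (η2 - 2 * η3) * t + η3 / 2 * t ^ 2)
            * Real.exp (-t))) := by
        refine (hasDerivAt_iff_tendsto_slope.mp hd).mono_left (nhdsWithin_mono t ?_)
        intro s hs
        exact ne_of_gt hs
      have hnn : ∀ᶠ s in nhdsWithin t (Set.Ioi t), 0 ≤ slope h t s := by
        filter_upwards [self_mem_nhdsWithin] with s hs
        have hts : t < s := hs
        have hle : h t ≤ h s := hmono ht (ht.trans hts.le) hts.le
        rw [slope_def_field]
        have := div_nonneg (sub_nonneg.mpr hle) (sub_nonneg.mpr hts.le)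
        simpa [div_eq_iff] using this
      have h0 : 0 ≤ θ1 * ((1 - 2 * η2 + η3) + (η2 - 2 * η3) * t + η3 / 2 * t ^ 2)
          * Real.exp (-t) := ge_of_tendsto htend hnn
      nlinarith [Real.exp_pos (-t), mul_pos h1 (Real.exp_pos (-t))]
    constructor
    · have h0 := key 0 le_rfl
      nlinarith [h0]
    · by_cases hc : 2 * η3 ≤ η2
      · exact Or.inl hc
      · right
        push_neg at hc
        have hη3 : 0 < η3 := by nlinarith
        have hk := key ((2 * η3 - η2) / η3) (le_of_lt (div_pos (by linarith) hη3))
        have hT : η3 * ((2 * η3 - η2) / η3) = 2 * η3 - η2 :=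
          mul_div_cancel₀ _ hη3.ne'
        nlinarith [hk, hT, hη3, mul_nonneg (mul_nonneg hη3.le hη3.le) hk,
          sq_nonneg (η3 * ((2 * η3 - η2) / η3) - (2 * η3 - η2))]
  · rintro ⟨hA, hB⟩
    have hPnn : ∀ x : ℝ, 0 ≤ x →
        0 ≤ (1 - 2 * η2 + η3) + (η2 - 2 * η3) * x + η3 / 2 * x ^ 2 := by
      intro x hx
      rcases hB with hB | hB
      · nlinarith [mul_nonneg (show (0:ℝ) ≤ η2 - 2 * η3 by linarith) hx,
          mul_nonneg h3 (sq_nonneg x)]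
      · rcases eq_or_lt_of_le h3 with h3' | h3'
        · have hη2 : η2 = 0 := by nlinarith
          rw [hη2, ← h3']
          nlinarith
        · nlinarith [sq_nonneg (η3 * x + η2 - 2 * η3), h3', hB, hx]
    refine convexOn_of_hasDerivWithinAt2_nonneg (convex_Ici 0) ?_
      (f' := h)
      (f'' := fun t => θ1 * ((1 - 2 * η2 + η3) + (η2 - 2 * η3) * t + η3 / 2 * t ^ 2)
        * Real.exp (-t)) ?_ ?_ ?_
    · exact fun x _ => (hd_g x).differentiableAt.continuousAt.continuousWithinAt
    · exact fun x _ => (hd_g x).hasDerivWithinAt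
    · exact fun x _ => (hd_h x).hasDerivWithinAt
    · intro x hx
      rw [interior_Ici] at hx
      have hP := hPnn x (le_of_lt hx)
      have := Real.exp_pos (-x)
      positivity
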